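/- Let Γ ⊂ ℂ be a quasismooth Jordan curve. There is a constant c = c(Γ) > 0 such that δ(2s) ≤ c δ(s) for all 0 < s < diam Γ. -/

import Mathlib

open MeasureTheory Metric Set Filter Bornology Complex
open scoped ENNReal NNReal Topology

noncomputable section

/-- `Γ` is a Jordan curve: the image of an injective continuous map of the unit circle. -/
def IsJordanCurve (Γ : Set ℂ) : Prop :=
  ∃ γ : ℂ → ℂ, ContinuousOn γ (Metric.sphere (0:ℂ) 1) ∧
    Set.InjOn γ (Metric.sphere (0:ℂ) 1) ∧ Γ = γ '' (Metric.sphere (0:ℂ) 1)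

/-- A (closed) subarc of `Γ`: a closed connected subset. -/
def IsSubarc (Γ J : Set ℂ) : Prop :=
  J ⊆ Γ ∧ IsClosed J ∧ IsPreconnected J

/-- `|Γ(z₁,z₂)|`: the length (1-dimensional Hausdorff measure) of the shorter subarc of `Γ`
joining `z₁` and `z₂`, described as the infimum of lengths of closed connected subsets of `Γ`
containing both points. -/
def shorterArcLength (Γ : Set ℂ) (z₁ z₂ : ℂ) : ℝ≥0∞ :=
  ⨅ (J : Set ℂ) (_ : IsSubarc Γ J ∧ z₁ ∈ J ∧ z₂ ∈ J), μH[1] J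

/-- `J` is (a realization of) the shorter arc `Γ(z₁,z₂)` of `Γ` between `z₁` and `z₂`. -/
def IsShorterArc (Γ : Set ℂ) (z₁ z₂ : ℂ) (J : Set ℂ) : Prop :=
  IsSubarc Γ J ∧ z₁ ∈ J ∧ z₂ ∈ J ∧ μH[1] J = shorterArcLength Γ z₁ z₂

/-- `Γ` is quasismooth (in the sense of Lavrentiev) with constant `Λ ≥ 1`:
`|Γ(z₁,z₂)| ≤ Λ |z₁ - z₂|`. -/
def IsQuasismooth (Γ : Set ℂ) (Λ : ℝ) : Prop :=
  1 ≤ Λ ∧ ∀ z₁ ∈ Γ, ∀ z₂ ∈ Γ,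
    shorterArcLength Γ z₁ z₂ ≤ ENNReal.ofReal (Λ * dist z₁ z₂)

/-- The union of the unbounded connected components of `Γᶜ`; for a Jordan curve `Γ` this is
the (unique) unbounded component `Ω` of the complement of `Γ`. -/
def unboundedComponent (Γ : Set ℂ) : Set ℂ :=
  {z | z ∉ Γ ∧ ¬ Bornology.IsBounded (connectedComponentIn Γᶜ z)}

/-- `d(A,B) := inf {|z-ζ| : z ∈ A, ζ ∈ B}`. -/
def setDist (A B : Set ℂ) : ℝ := sInf (Set.image2 dist A B)

/-- The exterior `𝔻*` of the closed unit disk (finite part). -/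
def extDisk : Set ℂ := {w : ℂ | 1 < ‖w‖}

/-- `Φ` is the conformal (holomorphic bijective) map of `Ω` onto `𝔻* = {|w| > 1}` normalized
by `Φ(∞) = ∞` and `Φ'(∞) := lim_{z→∞} Φ(z)/z > 0`. -/
def IsExtConformal (Ω : Set ℂ) (Φ : ℂ → ℂ) : Prop :=
  DifferentiableOn ℂ Φ Ω ∧ Set.BijOn Φ Ω extDisk ∧
    ∃ c : ℝ, 0 < c ∧
      Filter.Tendsto (fun z => Φ z / z) (Bornology.cobounded ℂ) (nhds (c : ℂ))

/-- `Φ` additionally extends to a homeomorphism of `closure Ω` onto `{|w| ≥ 1}`. -/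
def IsExtConformalClosure (Ω : Set ℂ) (Φ : ℂ → ℂ) : Prop :=
  IsExtConformal Ω Φ ∧ ContinuousOn Φ (closure Ω) ∧
    Set.BijOn Φ (closure Ω) {w : ℂ | 1 ≤ ‖w‖}

/-- The level curve `Γ_δ := {ζ ∈ Ω : |Φ(ζ)| = 1 + δ}`. -/
def levelCurve (Ω : Set ℂ) (Φ : ℂ → ℂ) (δ : ℝ) : Set ℂ :=
  {ζ ∈ Ω | ‖Φ ζ‖ = 1 + δ}

/-- `ρ_δ(z) := d({z}, Γ_δ)`. -/
def rho (Ω : Set ℂ) (Φ : ℂ → ℂ) (δ : ℝ) (z : ℂ) : ℝ :=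
  Metric.infDist z (levelCurve Ω Φ δ)

/-- `ν ∈ A∞(Γ)` with constant `lam ≥ 1`: `ν(J) ≤ lam · ν(S)` for every subarc `J ⊂ Γ` and
every Borel set `S ⊂ J` with `|J| ≤ 2|S|`. -/
def IsAInftyMeasure (Γ : Set ℂ) (ν : MeasureTheory.Measure ℂ) (lam : ℝ) : Prop :=
  1 ≤ lam ∧ ∀ J S : Set ℂ, IsSubarc Γ J → S ⊆ J → MeasurableSet S →
    μH[1] J ≤ 2 * μH[1] S → ν J ≤ ENNReal.ofReal lam * ν S

lemma mobius_identity (a b : ℂ) :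
    ‖1 - (starRingEnd ℂ) a * b‖^2 - ‖b - a‖^2 = (1 - ‖a‖^2) * (1 - ‖b‖^2) := by
  have h : ((1 - (starRingEnd ℂ) a * b) * (starRingEnd ℂ) (1 - (starRingEnd ℂ) a * b)
      - (b - a) * (starRingEnd ℂ) (b - a) : ℂ)
      = (1 - a * (starRingEnd ℂ) a) * (1 - b * (starRingEnd ℂ) b) := by
    simp only [map_sub, map_mul, map_one, Complex.conj_conj]; ring
  rw [Complex.mul_conj, Complex.mul_conj, Complex.mul_conj, Complex.mul_conj] at h
  have h2 : Complex.normSq (1 - (starRingEnd ℂ) a * b) - Complex.normSq (b - a)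
      = (1 - Complex.normSq a) * (1 - Complex.normSq b) := by exact_mod_cast h
  simp only [Complex.sq_norm]
  exact h2

lemma isPreconnected_norm_gt (r : ℝ) (hr : 0 ≤ r) :
    IsPreconnected {w : ℂ | r < ‖w‖} := by
  have himg : {w : ℂ | r < ‖w‖}
      = (fun p : ℝ × ℝ => (p.1 : ℂ) * Complex.exp (p.2 * Complex.I)) '' (Ioi r ×ˢ univ) := by
    ext w
    constructor
    · intro hw
      refine ⟨(‖w‖, Complex.arg w), ?_, ?_⟩
      · exact ⟨by simpa using hw, trivial⟩
      · exact Complex.norm_mul_exp_arg_mul_I w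
    · rintro ⟨⟨ρ, θ⟩, ⟨hρ, -⟩, rfl⟩
      have hρ' : r < ρ := hρ
      have : ‖((ρ:ℂ) * Complex.exp (θ * Complex.I))‖ = ρ := by
        rw [norm_mul, Complex.norm_real, Complex.norm_exp_ofReal_mul_I,
          mul_one]
        exact _root_.abs_of_nonneg (le_trans hr hρ'.le)
      simpa only [mem_setOf_eq, this] using hρ'
  rw [himg]
  exact ((isPreconnected_Ioi.prod isPreconnected_univ).image _
    (by fun_prop))

lemma aux_lt_one (x d : ℝ) (h : x * (1+d) = 1) (hd : 0 < d) (hx : 0 ≤ x) : x < 1 := by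
  nlinarith

lemma aux_inv_lt_one (t : ℝ) (h : 1 < t) : t⁻¹ < 1 := by
  have h0 : (0:ℝ) < t := by linarith
  have h1 : t⁻¹ * t = 1 := inv_mul_cancel₀ (ne_of_gt h0)
  nlinarith [inv_nonneg.mpr h0.le]

lemma aux_prod_lt_one (x y : ℝ) (hx : 0 ≤ x) (hx1 : x < 1) (hy : 0 ≤ y) (hy1 : y < 1) :
    x * y < 1 := by nlinarith

lemma aux_one_sub_sq_pos (x : ℝ) (h0 : 0 ≤ x) (h1 : x < 1) : 0 < 1 - x^2 := by nlinarith

lemma schwarz_algebra (x y E N : ℝ) (hx0 : 0 ≤ x) (hx1 : x < 1) (hy0 : 0 ≤ y) (hy1 : y < 1)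
    (hid : E^2 - N^2 = (1 - x^2)*(1 - y^2)) (hEge : 1 - x ≤ E) (hnum : N ≤ 1/2 * E)
    (hN0 : 0 ≤ N) : (3/8)*(1-x) ≤ 1 - y^2 := by
  have hE0 : 0 ≤ E := le_trans (by linarith) hEge
  have hE2 : (1-x)^2 ≤ E^2 := pow_le_pow_left₀ (by linarith) hEge 2
  have hN2 : N^2 ≤ (1/2*E)^2 := by
    apply pow_le_pow_left₀ hN0 hnum
  have hy2 : 0 ≤ 1 - y^2 := by nlinarith
  have hx1' : 0 < 1 - x := by linarith
  have h2 : (3/4)*(1-x)^2 ≤ (1-x^2)*(1-y^2) := by nlinarith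
  have h3 : (1-x^2)*(1-y^2) ≤ 2*(1-x)*(1-y^2) := by nlinarith
  nlinarith [mul_pos hx1' hx1']

lemma final_algebra (K δ₁ δ₂ x y : ℝ) (hK : 0 < K) (hδ₁ : 0 < δ₁) (hδ₂ : 0 < δ₂)
    (hx : x * (1+δ₂) = 1) (hy : y * (1+δ₁) = 1) (hx0 : 0 ≤ x) (hy0 : 0 ≤ y)
    (hK2 : 1 + δ₂ ≤ K) (hmain : (3/8)*(1-x) ≤ 1 - y^2) :
    δ₂ ≤ 16*K/3 * δ₁ := by
  have hAeq : 1 - x = δ₂ * x := by nlinarith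
  have hy1 : y ≤ 1 := by nlinarith
  have hBle : 1 - y^2 ≤ 2*δ₁ := by nlinarith
  have hxK : 1 ≤ x * K := by nlinarith
  have h1 : δ₂ ≤ K * (1 - x) := by nlinarith
  have h2 : K * (1-x) ≤ K * ((8/3)*(1-y^2)) := by
    apply mul_le_mul_of_nonneg_left _ hK.le
    linarith
  have h3 : K * ((8/3)*(1-y^2)) ≤ K * ((8/3)*(2*δ₁)) := by
    apply mul_le_mul_of_nonneg_left _ hK.le
    linarith
  calc δ₂ ≤ K*(1-x) := h1
    _ ≤ K * ((8/3)*(1-y^2)) := h2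
    _ ≤ K * ((8/3)*(2*δ₁)) := h3
    _ = 16*K/3*δ₁ := by ring

set_option maxHeartbeats 2000000 in
/-- (3.2n): there is `c = c(Γ) > 0` with `δ(2s) ≤ c δ(s)` for all
`0 < s < diam Γ`; here `δ(t)` is any positive number with `d(Γ, Γ_{δ(t)}) = t`. -/
theorem delta_doubling
    (Γ : Set ℂ) (Λ : ℝ) (hΓJ : IsJordanCurve Γ) (hΓq : IsQuasismooth Γ Λ)
    (Φ : ℂ → ℂ) (hΦ : IsExtConformal (unboundedComponent Γ) Φ) :
    ∃ c > (0:ℝ), ∀ s δ₁ δ₂ : ℝ,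
      0 < s → s < Metric.diam Γ →
      0 < δ₁ → setDist Γ (levelCurve (unboundedComponent Γ) Φ δ₁) = s →
      0 < δ₂ → setDist Γ (levelCurve (unboundedComponent Γ) Φ δ₂) = 2 * s →
      δ₂ ≤ c * δ₁ := by
  classical
  obtain ⟨hdiff, hbij, κ, hκpos, htend⟩ := hΦ
  set Ω : Set ℂ := unboundedComponent Γ with hΩdef
  -- basic facts about Γ
  obtain ⟨γ, hγc, hγi, hΓeq⟩ := hΓJ
  have hΓcomp : IsCompact Γ := by
    rw [hΓeq]; exact (isCompact_sphere 0 1).image_of_continuousOn hγc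
  have hΓne : Γ.Nonempty := by
    rw [hΓeq]; exact ⟨γ 1, mem_image_of_mem _ (by simp)⟩
  have hΓcl : IsClosed Γ := hΓcomp.isClosed
  obtain ⟨r₀', hr₀'⟩ := hΓcomp.isBounded.subset_closedBall 0
  set r₀ : ℝ := max r₀' 0 with hr₀def
  have hr₀0 : 0 ≤ r₀ := le_max_right _ _
  have hr₀ : ∀ z ∈ Γ, ‖z‖ ≤ r₀ := fun z hz => by
    have := hr₀' hz
    simp only [Metric.mem_closedBall, Complex.dist_eq, sub_zero] at this
    exact le_trans (by simpa using this) (le_max_left _ _)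
  -- membership in Ω for large norm
  have hSsubΓc : ∀ r : ℝ, r₀ ≤ r → {w : ℂ | r < ‖w‖} ⊆ Γᶜ := by
    intro r hr w hw
    intro hwΓ
    exact absurd (le_trans (hr₀ w hwΓ) hr) (not_le.mpr hw)
  have hRnorm : ∀ x : ℝ, 0 ≤ x → ‖((x:ℝ):ℂ)‖ = x := fun x hx => by
    rw [Complex.norm_real, Real.norm_eq_abs, _root_.abs_of_nonneg hx]
  have hSunb : ∀ r : ℝ, ¬ Bornology.IsBounded {w : ℂ | r < ‖w‖} := by
    intro r hb
    obtain ⟨M, hM⟩ := (Metric.isBounded_iff_subset_closedBall 0).mp hb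
    set q : ℝ := max M (max r 0) + 1 with hq
    have hq0 : 0 ≤ q := by positivity
    have hqn : ‖((q:ℝ):ℂ)‖ = q := hRnorm q hq0
    have hqS : ((q:ℝ):ℂ) ∈ {w : ℂ | r < ‖w‖} := by
      rw [mem_setOf_eq, hqn]
      have : r ≤ max M (max r 0) := le_trans (le_max_left r 0) (le_max_right _ _)
      linarith
    have h2 := hM hqS
    rw [Metric.mem_closedBall, Complex.dist_eq, sub_zero, hqn] at h2
    have : M ≤ max M (max r 0) := le_max_left _ _
    linarith
  have hΩmem : ∀ z : ℂ, r₀ < ‖z‖ → z ∈ Ω := by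
    intro z hz
    have hzΓc : z ∈ Γᶜ := hSsubΓc r₀ le_rfl hz
    have hsub : {w : ℂ | r₀ < ‖w‖} ⊆ connectedComponentIn Γᶜ z :=
      (isPreconnected_norm_gt r₀ hr₀0).subset_connectedComponentIn hz (hSsubΓc r₀ le_rfl)
    refine ⟨hzΓc, fun hb => hSunb r₀ (hb.subset hsub)⟩
  have hΩsubΓc : ∀ z ∈ Ω, z ∉ Γ := fun z hz => hz.1
  -- Ω is open
  have hΩopen : IsOpen Ω := by
    rw [isOpen_iff_forall_mem_open]
    intro z hz
    refine ⟨connectedComponentIn Γᶜ z, ?_, hΓcl.isOpen_compl.connectedComponentIn, 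
      mem_connectedComponentIn hz.1⟩
    intro w hw
    refine ⟨connectedComponentIn_subset _ _ hw, ?_⟩
    rw [← connectedComponentIn_eq hw]
    exact hz.2
  -- Ω is preconnected
  have hΩconn : IsPreconnected Ω := by
    set z₀ : ℂ := ((r₀ + 1 : ℝ) : ℂ) with hz₀def
    have hz₀n : ‖z₀‖ = r₀ + 1 := hRnorm _ (by linarith)
    have hz₀S : z₀ ∈ {w : ℂ | r₀ < ‖w‖} := by rw [mem_setOf_eq, hz₀n]; linarith
    have hSsub : {w : ℂ | r₀ < ‖w‖} ⊆ connectedComponentIn Γᶜ z₀ :=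
      (isPreconnected_norm_gt r₀ hr₀0).subset_connectedComponentIn hz₀S (hSsubΓc r₀ le_rfl)
    have hΩeq : Ω = connectedComponentIn Γᶜ z₀ := by
      apply Subset.antisymm
      · intro z hz
        obtain ⟨hzΓ, hzu⟩ := hz
        have : ∃ w ∈ connectedComponentIn Γᶜ z, r₀ < ‖w‖ := by
          by_contra hcon
          push_neg at hcon
          exact hzu ((Metric.isBounded_iff_subset_closedBall 0).mpr ⟨r₀, fun w hw => by
            simp only [Metric.mem_closedBall, Complex.dist_eq, sub_zero]
            simpa using hcon w hw⟩)
        obtain ⟨w, hw, hwn⟩ := this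
        have h1 : connectedComponentIn Γᶜ z = connectedComponentIn Γᶜ w :=
          connectedComponentIn_eq hw
        have h2 : connectedComponentIn Γᶜ z₀ = connectedComponentIn Γᶜ w :=
          connectedComponentIn_eq (hSsub hwn)
        rw [h2, ← h1]
        exact mem_connectedComponentIn hzΓ
      · intro w hw
        refine ⟨connectedComponentIn_subset _ _ hw, fun hb => ?_⟩
        rw [← connectedComponentIn_eq hw] at hb
        exact hSunb r₀ (hb.subset hSsub)
    rw [hΩeq]
    exact isPreconnected_connectedComponentIn
  -- growth bounds near infinity
  have h1 : ∀ᶠ z in Bornology.cobounded ℂ, dist (Φ z / z) (κ:ℂ) < κ/2 :=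
    Metric.tendsto_nhds.mp htend (κ/2) (by positivity)
  obtain ⟨r₁, -, hr₁⟩ := (Metric.hasBasis_cobounded_compl_closedBall (0:ℂ)).eventually_iff.mp h1
  set R₂ : ℝ := max (max (|r₁| + 1) (r₀ + 1)) (2/κ) with hR₂def
  have hR₂r₁ : |r₁| + 1 ≤ R₂ := le_trans (le_max_left _ _) (le_max_left _ _)
  have hR₂r₀ : r₀ + 1 ≤ R₂ := le_trans (le_max_right _ _) (le_max_left _ _)
  have hR₂κ : 2/κ ≤ R₂ := le_max_right _ _
  have hR₂pos : 0 < R₂ := lt_of_lt_of_le (by positivity) hR₂κ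
  have hkey : ∀ z : ℂ, R₂ ≤ ‖z‖ → ‖Φ z - (κ:ℂ) * z‖ ≤ κ/2 * ‖z‖ := by
    intro z hz
    have hz0 : z ≠ 0 := by
      intro h; rw [h, norm_zero] at hz; linarith
    have hmem : z ∈ (Metric.closedBall (0:ℂ) r₁)ᶜ := by
      simp only [mem_compl_iff, Metric.mem_closedBall, Complex.dist_eq, sub_zero, not_le]
      have : |r₁| + 1 ≤ ‖z‖ := le_trans hR₂r₁ hz
      have : r₁ ≤ |r₁| := le_abs_self r₁
      linarith
    have hlt := hr₁ hmem
    rw [Complex.dist_eq] at hlt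
    have heq : Φ z - (κ:ℂ) * z = (Φ z / z - (κ:ℂ)) * z := by
      field_simp
    rw [heq, norm_mul]
    exact mul_le_mul_of_nonneg_right hlt.le (norm_nonneg z)
  have hκz : ∀ z : ℂ, ‖(κ:ℂ) * z‖ = κ * ‖z‖ := by
    intro z
    rw [norm_mul, Complex.norm_real, Real.norm_eq_abs, _root_.abs_of_nonneg hκpos.le]
  have hgrowlow : ∀ z : ℂ, R₂ ≤ ‖z‖ → κ/2 * ‖z‖ ≤ ‖Φ z‖ := by
    intro z hz
    have h2 := hkey z hz
    have h3 : ‖(κ:ℂ) * z‖ ≤ ‖Φ z‖ + ‖Φ z - (κ:ℂ) * z‖ := by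
      calc ‖(κ:ℂ) * z‖ = ‖Φ z - (Φ z - (κ:ℂ) * z)‖ := by ring_nf
        _ ≤ ‖Φ z‖ + ‖Φ z - (κ:ℂ) * z‖ := norm_sub_le _ _
    rw [hκz z] at h3
    linarith
  have hgrowup : ∀ z : ℂ, R₂ ≤ ‖z‖ → ‖Φ z‖ ≤ 3*κ/2 * ‖z‖ := by
    intro z hz
    have h2 := hkey z hz
    have h3 : ‖Φ z‖ ≤ ‖(κ:ℂ) * z‖ + ‖Φ z - (κ:ℂ) * z‖ := by
      calc ‖Φ z‖ = ‖(κ:ℂ) * z + (Φ z - (κ:ℂ) * z)‖ := by ring_nf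
        _ ≤ ‖(κ:ℂ) * z‖ + ‖Φ z - (κ:ℂ) * z‖ := norm_add_le _ _
    rw [hκz z] at h3
    linarith
  -- open mapping
  have hOM : ∀ s ⊆ Ω, IsOpen s → IsOpen (Φ '' s) := by
    rcases (hdiff.analyticOnNhd hΩopen).is_constant_or_isOpen hΩconn with ⟨w, hw⟩ | h
    · exfalso
      have hz₁ : ((r₀ + 1 : ℝ) : ℂ) ∈ Ω := hΩmem _ (by rw [hRnorm _ (by linarith)]; linarith)
      have hz₂ : ((r₀ + 2 : ℝ) : ℂ) ∈ Ω := hΩmem _ (by rw [hRnorm _ (by linarith)]; linarith)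
      have heq12 : ((r₀ + 1 : ℝ) : ℂ) = ((r₀ + 2 : ℝ) : ℂ) :=
        hbij.injOn hz₁ hz₂ (by rw [hw _ hz₁, hw _ hz₂])
      have : (r₀ + 1 : ℝ) = (r₀ + 2 : ℝ) := by exact_mod_cast heq12
      linarith
    · exact h
  -- properness at infinity
  have hproper : ∀ R : ℝ, R₂ ≤ R → ∀ ζ ∈ Ω, 3*κ/2*R < ‖Φ ζ‖ → R < ‖ζ‖ := by
    intro R hR ζ hζ hbig
    rcases lt_trichotomy ‖ζ‖ R with hlt | heq | hgt
    · exfalso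
      set Uin : Set ℂ := Ω ∩ Metric.ball 0 R with hUindef
      set Uout : Set ℂ := {z : ℂ | R < ‖z‖} with hUoutdef
      have hUoutΩ : Uout ⊆ Ω := fun z hz => hΩmem z (lt_of_le_of_lt (by linarith) hz)
      set W : Set ℂ := {w : ℂ | 3*κ/2*R < ‖w‖} with hWdef
      have hRbound : 3 ≤ 3*κ/2*R := by
        have h4 : 2/κ ≤ R := le_trans hR₂κ hR
        have h5 : 2 ≤ κ * R := by
          rw [div_le_iff₀ hκpos] at h4
          nlinarith [mul_comm R κ]
        nlinarith
      have hWsub : W ⊆ Φ '' Uin ∪ Φ '' Uout := by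
        intro w hw
        have hw' : 3*κ/2*R < ‖w‖ := hw
        have hwext : w ∈ extDisk := by
          show (1:ℝ) < ‖w‖
          linarith
        obtain ⟨z, hzΩ, rfl⟩ := hbij.surjOn hwext
        have hzR : ‖z‖ ≠ R := by
          intro hzR
          have := hgrowup z (by rw [hzR]; exact hR)
          rw [hzR] at this
          linarith
        rcases lt_or_gt_of_ne hzR with h | h
        · refine Or.inl ⟨z, ⟨hzΩ, ?_⟩, rfl⟩
          rw [Metric.mem_ball, Complex.dist_eq, sub_zero]
          exact h
        · exact Or.inr ⟨z, h, rfl⟩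
      have hUinopen : IsOpen (Φ '' Uin) := hOM _ inter_subset_left (hΩopen.inter Metric.isOpen_ball)
      have hUoutopen : IsOpen (Φ '' Uout) := by
        refine hOM _ hUoutΩ ?_
        have : Uout = (norm : ℂ → ℝ) ⁻¹' (Ioi R) := rfl
        rw [this]
        exact continuous_norm.isOpen_preimage _ isOpen_Ioi
      have hWne1 : (W ∩ Φ '' Uin).Nonempty := by
        refine ⟨Φ ζ, hbig, ⟨ζ, ⟨hζ, ?_⟩, rfl⟩⟩
        rw [Metric.mem_ball, Complex.dist_eq, sub_zero]
        exact hlt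
      have hWne2 : (W ∩ Φ '' Uout).Nonempty := by
        have hz₃n : ‖((3*R + 1 : ℝ) : ℂ)‖ = 3*R + 1 := hRnorm _ (by linarith)
        have hz₃R₂ : R₂ ≤ ‖((3*R + 1 : ℝ) : ℂ)‖ := by rw [hz₃n]; linarith
        have hlow := hgrowlow _ hz₃R₂
        rw [hz₃n] at hlow
        refine ⟨Φ ((3*R + 1 : ℝ) : ℂ), ?_, ⟨_, ?_, rfl⟩⟩
        · show 3*κ/2*R < ‖Φ ((3*R + 1 : ℝ) : ℂ)‖
          have hstep : 3*κ/2*R < κ/2 * (3*R+1) := by nlinarith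
          linarith
        · show R < ‖((3*R + 1 : ℝ) : ℂ)‖
          rw [hz₃n]; linarith
      obtain ⟨y, hyW, hyu, hyv⟩ := isPreconnected_norm_gt (3*κ/2*R) (by linarith [hRbound]) 
        (Φ '' Uin) (Φ '' Uout) hUinopen hUoutopen hWsub hWne1 hWne2
      obtain ⟨x₁, hx₁, hxy₁⟩ := hyu
      obtain ⟨x₂, hx₂, hxy₂⟩ := hyv
      have : x₁ = x₂ := hbij.injOn hx₁.1 (hUoutΩ hx₂) (by rw [hxy₁, hxy₂])
      have hn₁ : ‖x₁‖ < R := by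
        have := hx₁.2
        rw [Metric.mem_ball, Complex.dist_eq, sub_zero] at this
        exact this
      have hn₂ : R < ‖x₂‖ := hx₂
      rw [this] at hn₁
      linarith
    · exfalso
      have := hgrowup ζ (by rw [heq]; exact hR)
      rw [heq] at this
      linarith
    · exact hgt
  -- the inverse map
  set Ψ : ℂ → ℂ := Function.invFunOn Φ Ω with hΨdef
  have hinv : Set.InvOn Ψ Φ Ω extDisk := hbij.invOn_invFunOn
  have hΨleft : ∀ z ∈ Ω, Ψ (Φ z) = z := fun z hz => hinv.1 hz
  have hΨright : ∀ w ∈ extDisk, Φ (Ψ w) = w := fun w hw => hinv.2 hw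
  have hΨmem : ∀ w ∈ extDisk, Ψ w ∈ Ω := by
    intro w hw
    obtain ⟨z, hz, rfl⟩ := hbij.surjOn hw
    rw [hΨleft z hz]
    exact hz
  have hΨcont : ContinuousOn Ψ extDisk := by
    rw [_root_.continuousOn_iff']
    intro t ht
    refine ⟨Φ '' (t ∩ Ω), hOM _ inter_subset_right (ht.inter hΩopen), ?_⟩
    ext w
    constructor
    · rintro ⟨hwt, hwe⟩
      exact ⟨⟨Ψ w, ⟨hwt, hΨmem w hwe⟩, hΨright w hwe⟩, hwe⟩
    · rintro ⟨⟨z, ⟨hzt, hzΩ⟩, rfl⟩, hwe⟩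
      refine ⟨?_, hwe⟩
      rw [mem_preimage, hΨleft z hzΩ]
      exact hzt
  -- level curves
  have hlevelsub : ∀ δ : ℝ, 0 < δ → Metric.sphere (0:ℂ) (1+δ) ⊆ extDisk := by
    intro δ hδ w hw
    rw [mem_sphere_iff_norm, sub_zero] at hw
    show (1:ℝ) < ‖w‖
    rw [hw]; linarith
  have hlevelim : ∀ δ : ℝ, 0 < δ →
      levelCurve Ω Φ δ = Ψ '' (Metric.sphere (0:ℂ) (1+δ)) := by
    intro δ hδ
    ext ζ
    constructor
    · rintro ⟨hζΩ, hζn⟩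
      refine ⟨Φ ζ, ?_, hΨleft ζ hζΩ⟩
      rw [mem_sphere_iff_norm, sub_zero]
      exact hζn
    · rintro ⟨w, hw, rfl⟩
      have hwe : w ∈ extDisk := hlevelsub δ hδ hw
      refine ⟨hΨmem w hwe, ?_⟩
      rw [hΨright w hwe]
      rw [mem_sphere_iff_norm, sub_zero] at hw
      exact hw
  have hlevelcomp : ∀ δ : ℝ, 0 < δ → IsCompact (levelCurve Ω Φ δ) := by
    intro δ hδ
    rw [hlevelim δ hδ]
    exact (isCompact_sphere 0 (1+δ)).image_of_continuousOn (hΨcont.mono (hlevelsub δ hδ))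
  have hlevelne : ∀ δ : ℝ, 0 < δ → (levelCurve Ω Φ δ).Nonempty := by
    intro δ hδ
    rw [hlevelim δ hδ]
    refine ⟨Ψ ((1+δ : ℝ) : ℂ), ⟨((1+δ : ℝ) : ℂ), ?_, rfl⟩⟩
    rw [mem_sphere_iff_norm, sub_zero, hRnorm _ (by linarith)]
  have hlevelΩ : ∀ δ : ℝ, ∀ ζ ∈ levelCurve Ω Φ δ, ζ ∈ Ω := fun δ ζ hζ => hζ.1
  -- setDist facts
  have hsetdist_lb : ∀ (L : Set ℂ) (t : ℝ), setDist Γ L = t →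
      ∀ z ∈ Γ, ∀ ζ ∈ L, t ≤ dist z ζ := by
    intro L t hL z hz ζ hζ
    rw [← hL]
    apply csInf_le
    · exact ⟨0, fun x hx => by
        obtain ⟨z', hz', ζ', hζ', rfl⟩ := hx
        exact dist_nonneg⟩
    · exact mem_image2_of_mem hz hζ
  have hsetdist_mem : ∀ (L : Set ℂ), IsCompact L → L.Nonempty →
      ∃ z ∈ Γ, ∃ ζ ∈ L, dist z ζ = setDist Γ L := by
    intro L hLcomp hLne
    have himg : Set.image2 dist Γ L = (fun p : ℂ × ℂ => dist p.1 p.2) '' (Γ ×ˢ L) := by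
      rw [← Set.image_uncurry_prod]
      rfl
    have hc : IsCompact (Set.image2 dist Γ L) := by
      rw [himg]
      exact (hΓcomp.prod hLcomp).image continuous_dist
    have hne : (Set.image2 dist Γ L).Nonempty := by
      obtain ⟨z, hz⟩ := hΓne
      obtain ⟨ζ, hζ⟩ := hLne
      exact ⟨dist z ζ, mem_image2_of_mem hz hζ⟩
    have := hc.sInf_mem hne
    obtain ⟨z, hz, ζ, hζ, heq⟩ := this
    exact ⟨z, hz, ζ, hζ, heq⟩
  have hsetdist_glb : ∀ (L : Set ℂ) (b : ℝ), L.Nonempty → (∀ z ∈ Γ, ∀ ζ ∈ L, b ≤ dist z ζ) →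
      b ≤ setDist Γ L := by
    intro L b hLne hb
    apply le_csInf
    · obtain ⟨z, hz⟩ := hΓne
      obtain ⟨ζ, hζ⟩ := hLne
      exact ⟨dist z ζ, mem_image2_of_mem hz hζ⟩
    · rintro x ⟨z, hz, ζ, hζ, rfl⟩
      exact hb z hz ζ hζ
  -- bound on δ for level curves near Γ
  set D : ℝ := Metric.diam Γ with hDdef
  set Rst : ℝ := max R₂ (r₀ + 2*D + 1) with hRstdef
  set K : ℝ := 3*κ/2*Rst with hKdef
  have hδbound : ∀ δ t : ℝ, 0 < δ → 0 < t → t ≤ 2*D →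
      setDist Γ (levelCurve Ω Φ δ) = t → 1 + δ ≤ K := by
    intro δ t hδ ht ht2D hsd
    by_contra hcon
    push_neg at hcon
    have hbig : ∀ ζ ∈ levelCurve Ω Φ δ, Rst < ‖ζ‖ := by
      intro ζ hζ
      refine hproper Rst (le_max_left _ _) ζ hζ.1 ?_
      rw [hζ.2]
      exact hcon
    have hlb : ∀ z ∈ Γ, ∀ ζ ∈ levelCurve Ω Φ δ, 2*D + 1 ≤ dist z ζ := by
      intro z hz ζ hζ
      have h1 : ‖ζ‖ - ‖z‖ ≤ ‖ζ - z‖ := norm_sub_norm_le ζ z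
      have h2 : dist z ζ = ‖ζ - z‖ := by rw [dist_comm, dist_eq_norm]
      have h3 : Rst < ‖ζ‖ := hbig ζ hζ
      have h4 : ‖z‖ ≤ r₀ := hr₀ z hz
      have h5 : r₀ + 2*D + 1 ≤ Rst := le_max_right _ _
      rw [h2]
      linarith
    have := hsetdist_glb (levelCurve Ω Φ δ) (2*D+1) (hlevelne δ hδ) hlb
    rw [hsd] at this
    linarith
  -- helper: connected sets avoiding Γ stay in Ω
  have hconnΩ : ∀ S : Set ℂ, IsPreconnected S → (∀ w ∈ S, w ∉ Γ) →
      ∀ x, x ∈ S → x ∈ Ω → S ⊆ Ω := by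
    intro S hS hSΓ x hxS hxΩ w hw
    have hsub : S ⊆ connectedComponentIn Γᶜ x :=
      hS.subset_connectedComponentIn hxS (fun u hu => hSΓ u hu)
    refine ⟨hSΓ w hw, ?_⟩
    rw [← connectedComponentIn_eq (hsub hw)]
    exact hxΩ.2
  have hRnormabs : ∀ x : ℝ, ‖((x:ℝ):ℂ)‖ = |x| := fun x => by
    rw [Complex.norm_real, Real.norm_eq_abs]
  have hKpos : 0 < K := by
    have hRstpos : 0 < Rst := lt_of_lt_of_le hR₂pos (le_max_left _ _)
    have h32 : 0 < 3*κ/2 := by linarith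
    rw [hKdef]
    exact mul_pos h32 hRstpos
  -- the constant
  refine ⟨16*K/3 + 2, by linarith, ?_⟩
  intro s δ₁ δ₂ hs hsD hδ₁ hsd₁ hδ₂ hsd₂
  rcases le_or_gt δ₂ δ₁ with hle | hlt
  · have h1 : δ₁ ≤ (16*K/3 + 2) * δ₁ := le_mul_of_one_le_left hδ₁.le (by linarith)
    linarith
  have hD0 : 0 < D := lt_trans hs hsD
  have hK1 : 1 + δ₁ ≤ K := hδbound δ₁ s hδ₁ hs (by linarith) hsd₁
  have hK2 : 1 + δ₂ ≤ K := hδbound δ₂ (2*s) hδ₂ (by linarith) (by linarith) hsd₂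
  -- points realizing the distance
  obtain ⟨zs, hzs, ζ₂, hζ₂L, hd2⟩ :=
    hsetdist_mem (levelCurve Ω Φ δ₂) (hlevelcomp δ₂ hδ₂) (hlevelne δ₂ hδ₂)
  rw [hsd₂] at hd2
  have hζ₂Ω : ζ₂ ∈ Ω := hζ₂L.1
  have hζ₂n : ‖Φ ζ₂‖ = 1 + δ₂ := hζ₂L.2
  have hL₂lb : ∀ z ∈ Γ, ∀ ζ ∈ levelCurve Ω Φ δ₂, 2*s ≤ dist z ζ :=
    hsetdist_lb _ _ hsd₂
  have hL₁lb : ∀ z ∈ Γ, ∀ ζ ∈ levelCurve Ω Φ δ₁, s ≤ dist z ζ :=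
    hsetdist_lb _ _ hsd₁
  -- the segment from ζ₂ to its nearest boundary point
  set σ : ℝ → ℂ := fun t => ζ₂ + ((t:ℝ):ℂ) * (zs - ζ₂) with hσdef
  have hσcont : Continuous σ := by
    apply Continuous.add continuous_const
    exact (Complex.continuous_ofReal).mul continuous_const
  have hσ0 : σ 0 = ζ₂ := by simp [hσdef]
  have hzsnorm : ‖ζ₂ - zs‖ = 2*s := by
    rw [← dist_eq_norm, dist_comm, hd2]
  have hσsub1 : ∀ t : ℝ, σ t - zs = ((1 - t : ℝ) : ℂ) * (ζ₂ - zs) := by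
    intro t
    simp only [hσdef]
    push_cast
    ring
  have hσsub2 : ∀ t : ℝ, σ t - ζ₂ = ((t : ℝ) : ℂ) * (zs - ζ₂) := by
    intro t
    simp only [hσdef]
    ring
  have hσdistz : ∀ t : ℝ, t ≤ 1 → dist (σ t) zs = (1-t)*(2*s) := by
    intro t ht
    rw [dist_eq_norm, hσsub1 t, norm_mul, hzsnorm, hRnormabs (1-t),
      _root_.abs_of_nonneg (by linarith)]
  have hσdistζ₂ : ∀ t : ℝ, 0 ≤ t → dist (σ t) ζ₂ = t*(2*s) := by
    intro t ht
    rw [dist_eq_norm, hσsub2 t, norm_mul, norm_sub_rev, hzsnorm, hRnormabs t,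
      _root_.abs_of_nonneg ht]
  have hσdistΓ : ∀ t : ℝ, t ∈ Ico (0:ℝ) 1 → ∀ z ∈ Γ, (1-t)*(2*s) ≤ dist (σ t) z := by
    intro t ht z hz
    have h1 : dist ζ₂ z ≤ dist ζ₂ (σ t) + dist (σ t) z := dist_triangle _ _ _
    have h2 : dist ζ₂ (σ t) = t*(2*s) := by rw [dist_comm]; exact hσdistζ₂ t ht.1
    have h3 : 2*s ≤ dist ζ₂ z := by rw [dist_comm]; exact hL₂lb z hz ζ₂ hζ₂L
    rw [h2] at h1
    linarith
  have hσnotΓ : ∀ t : ℝ, t ∈ Ico (0:ℝ) 1 → σ t ∉ Γ := by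
    intro t ht hmem
    have := hσdistΓ t ht (σ t) hmem
    rw [dist_self] at this
    have hpos : 0 < (1-t)*(2*s) := mul_pos (by linarith [ht.2]) (by linarith)
    linarith
  have hσmem : ∀ t : ℝ, t ∈ Ico (0:ℝ) 1 → σ t ∈ Ω := by
    intro t ht
    have himg : σ '' (Icc 0 t) ⊆ Ω := by
      apply hconnΩ (σ '' (Icc 0 t))
        (isPreconnected_Icc.image σ hσcont.continuousOn)
      · rintro w ⟨u, hu, rfl⟩
        exact hσnotΓ u ⟨hu.1, lt_of_le_of_lt hu.2 ht.2⟩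
      · exact mem_image_of_mem σ (left_mem_Icc.mpr ht.1)
      · rw [hσ0]; exact hζ₂Ω
    exact himg (mem_image_of_mem σ (right_mem_Icc.mpr ht.1))
  -- the compact region between the level curves, and its distance to Γ
  set A : Set ℂ := {w : ℂ | 1 + δ₁ ≤ ‖w‖ ∧ ‖w‖ ≤ K} with hAdef
  have hAclosed : IsClosed A := by
    have : A = (norm : ℂ → ℝ) ⁻¹' (Icc (1+δ₁) K) := rfl
    rw [this]
    exact isClosed_Icc.preimage continuous_norm
  have hAbdd : Bornology.IsBounded A := by
    apply (Metric.isBounded_closedBall (x := (0:ℂ)) (r := K)).subset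
    intro w hw
    rw [Metric.mem_closedBall, Complex.dist_eq, sub_zero]
    exact hw.2
  have hAcomp : IsCompact A := Metric.isCompact_of_isClosed_isBounded hAclosed hAbdd
  have hAsub : A ⊆ extDisk := by
    intro w hw
    show (1:ℝ) < ‖w‖
    have := hw.1
    linarith
  set K₀ : Set ℂ := Ψ '' A with hK₀def
  have hK₀comp : IsCompact K₀ := hAcomp.image_of_continuousOn (hΨcont.mono hAsub)
  have hK₀mem : ∀ ζ ∈ Ω, 1 + δ₁ ≤ ‖Φ ζ‖ → ‖Φ ζ‖ ≤ K → ζ ∈ K₀ := by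
    intro ζ hζ h1 h2
    exact ⟨Φ ζ, ⟨h1, h2⟩, hΨleft ζ hζ⟩
  have hK₀Ω : ∀ x ∈ K₀, x ∈ Ω := by
    rintro x ⟨w, hw, rfl⟩
    exact hΨmem w (hAsub hw)
  obtain ⟨η, hη0, hη1, hηpr⟩ : ∃ η : ℝ, 0 < η ∧ η ≤ 1 ∧ ∀ x ∈ K₀, ∀ z ∈ Γ, η ≤ dist x z := by
    rcases Set.eq_empty_or_nonempty K₀ with hemp | hne
    · refine ⟨1, one_pos, le_rfl, ?_⟩
      rw [hemp]
      rintro x ⟨⟩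
    · obtain ⟨p, hp, hpmin⟩ := (hK₀comp.prod hΓcomp).exists_isMinOn (hne.prod hΓne)
        continuous_dist.continuousOn
      have hη₀pos : 0 < dist p.1 p.2 := by
        rw [dist_pos]
        intro hpe
        exact hΩsubΓc p.1 (hK₀Ω p.1 hp.1) (hpe ▸ hp.2)
      refine ⟨min 1 (dist p.1 p.2), lt_min one_pos hη₀pos, min_le_left _ _, ?_⟩
      intro x hx z hz
      have hmp := hpmin (Set.mk_mem_prod hx hz)
      exact le_trans (min_le_right _ _) hmp
  -- the crossing time
  set m : ℝ := min η (2*s) with hmdef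
  have hm0 : 0 < m := lt_min hη0 (by linarith)
  have hmη : m ≤ η := min_le_left _ _
  have hm2s : m ≤ 2*s := min_le_right _ _
  set τ : ℝ := 1 - m/(4*s) with hτdef
  have hfrac : m/(4*s) ≤ 1/2 := by
    rw [div_le_iff₀ (by linarith)]
    linarith
  have hfracpos : 0 < m/(4*s) := by positivity
  have hτmem : τ ∈ Ico (0:ℝ) 1 := ⟨by rw [hτdef]; linarith, by rw [hτdef]; linarith⟩
  have hστzs : dist (σ τ) zs = m/2 := by
    rw [hσdistz τ hτmem.2.le, hτdef]
    field_simp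
    ring
  set F : ℝ → ℝ := fun t => ‖Φ (σ t)‖ with hFdef
  have hσIccΩ : ∀ t ∈ Icc (0:ℝ) τ, σ t ∈ Ω :=
    fun t ht => hσmem t ⟨ht.1, lt_of_le_of_lt ht.2 hτmem.2⟩
  have hFcont : ContinuousOn F (Icc 0 τ) := by
    apply continuous_norm.comp_continuousOn
    exact hdiff.continuousOn.comp hσcont.continuousOn hσIccΩ
  have hF0 : F 0 = 1 + δ₂ := by
    show ‖Φ (σ 0)‖ = 1 + δ₂
    rw [hσ0, hζ₂n]
  have hFτ : F τ < 1 + δ₁ := by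
    by_contra hcon
    push_neg at hcon
    have hcon' : 1 + δ₁ ≤ ‖Φ (σ τ)‖ := hcon
    have hστΩ : σ τ ∈ Ω := hσIccΩ τ ⟨hτmem.1, le_rfl⟩
    rcases le_or_gt (‖Φ (σ τ)‖) K with hK' | hK'
    · have hin : σ τ ∈ K₀ := hK₀mem _ hστΩ hcon' hK'
      have := hηpr _ hin zs hzs
      rw [hστzs] at this
      linarith
    · have hRlt : Rst < ‖σ τ‖ := by
        apply hproper Rst (le_max_left _ _) _ hστΩ
        rw [← hKdef]
        exact hK'
      have h1 : ‖σ τ‖ - ‖zs‖ ≤ ‖σ τ - zs‖ := norm_sub_norm_le _ _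
      have h2 : ‖σ τ - zs‖ = m/2 := by rw [← dist_eq_norm]; exact hστzs
      have h3 : ‖zs‖ ≤ r₀ := hr₀ zs hzs
      have h4 : r₀ + 2*D + 1 ≤ Rst := le_max_right _ _
      rw [h2] at h1
      linarith
  have hmemIcc : (1:ℝ) + δ₁ ∈ Icc (F τ) (F 0) := by
    constructor
    · exact hFτ.le
    · rw [hF0]; linarith
  obtain ⟨t₁, ht₁mem, ht₁⟩ := intermediate_value_Icc' hτmem.1 hFcont hmemIcc
  have ht₁Ico : t₁ ∈ Ico (0:ℝ) 1 := ⟨ht₁mem.1, lt_of_le_of_lt ht₁mem.2 hτmem.2⟩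
  have hζ₁Ω : σ t₁ ∈ Ω := hσmem t₁ ht₁Ico
  have hζ₁n : ‖Φ (σ t₁)‖ = 1 + δ₁ := ht₁
  have hζ₁L : σ t₁ ∈ levelCurve Ω Φ δ₁ := ⟨hζ₁Ω, hζ₁n⟩
  have hζ₁zs : s ≤ dist (σ t₁) zs := by
    rw [dist_comm]
    exact hL₁lb zs hzs _ hζ₁L
  have ht₁half : t₁ ≤ 1/2 := by
    by_contra hc
    push_neg at hc
    have h1 : (1-t₁)*(2*s) < (1/2)*(2*s) :=
      mul_lt_mul_of_pos_right (by linarith) (by linarith)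
    rw [hσdistz t₁ ht₁Ico.2.le] at hζ₁zs
    linarith
  have hζ₁ζ₂ : dist (σ t₁) ζ₂ ≤ s := by
    rw [hσdistζ₂ t₁ ht₁Ico.1]
    have h1 : t₁*(2*s) ≤ (1/2)*(2*s) :=
      mul_le_mul_of_nonneg_right ht₁half (by linarith)
    linarith
  -- Schwarz lemma on the ball B(ζ₂, 2s)
  have hBΩ : Metric.ball ζ₂ (2*s) ⊆ Ω := by
    apply hconnΩ _ (convex_ball ζ₂ (2*s)).isPreconnected
    · intro w hw hwΓ
      have h1 : 2*s ≤ dist ζ₂ w + dist w (w) + 0 := by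
        have h2 : 2*s ≤ dist w ζ₂ := hL₂lb w hwΓ ζ₂ hζ₂L
        rw [dist_comm] at h2
        simp [dist_self]
        linarith
      have h3 : dist w ζ₂ < 2*s := Metric.mem_ball.mp hw
      have h2 : 2*s ≤ dist w ζ₂ := hL₂lb w hwΓ ζ₂ hζ₂L
      linarith
    · exact Metric.mem_ball_self (by linarith)
    · exact hζ₂Ω
  have hΦBgt1 : ∀ z ∈ Metric.ball ζ₂ (2*s), 1 < ‖Φ z‖ := by
    intro z hz
    exact hbij.mapsTo (hBΩ hz)
  have hΦBne0 : ∀ z ∈ Metric.ball ζ₂ (2*s), Φ z ≠ 0 := by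
    intro z hz h0
    have := hΦBgt1 z hz
    rw [h0, norm_zero] at this
    linarith
  set a : ℂ := (Φ ζ₂)⁻¹ with hadef
  have hanorm : ‖a‖ = (1+δ₂)⁻¹ := by rw [hadef, norm_inv, hζ₂n]
  have hamul : ‖a‖ * (1+δ₂) = 1 := by
    rw [hanorm]
    field_simp
  have halt1 : ‖a‖ < 1 := aux_lt_one _ _ hamul hδ₂ (norm_nonneg a)
  have hbBlt1 : ∀ z ∈ Metric.ball ζ₂ (2*s), ‖(Φ z)⁻¹‖ < 1 := by
    intro z hz
    rw [norm_inv]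
    exact aux_inv_lt_one _ (hΦBgt1 z hz)
  have hden : ∀ z ∈ Metric.ball ζ₂ (2*s), 1 - (starRingEnd ℂ) a * (Φ z)⁻¹ ≠ 0 := by
    intro z hz h0
    have h1 : (starRingEnd ℂ) a * (Φ z)⁻¹ = 1 := by
      have := sub_eq_zero.mp h0
      exact this.symm
    have h2 : ‖(starRingEnd ℂ) a * (Φ z)⁻¹‖ = 1 := by rw [h1, norm_one]
    rw [norm_mul, RCLike.norm_conj] at h2
    have h3 := hbBlt1 z hz
    have h4 : ‖a‖ * ‖(Φ z)⁻¹‖ < 1 :=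
      aux_prod_lt_one _ _ (norm_nonneg a) halt1 (norm_nonneg _) h3
    linarith
  set g : ℂ → ℂ := fun z => ((Φ z)⁻¹ - a) / (1 - (starRingEnd ℂ) a * (Φ z)⁻¹) with hgdef
  have hgdiff : DifferentiableOn ℂ g (Metric.ball ζ₂ (2*s)) := by
    have hΦdiffB : DifferentiableOn ℂ Φ (Metric.ball ζ₂ (2*s)) := hdiff.mono hBΩ
    have hinvdiff : DifferentiableOn ℂ (fun z => (Φ z)⁻¹) (Metric.ball ζ₂ (2*s)) :=
      hΦdiffB.inv hΦBne0
    exact ((hinvdiff.sub (differentiableOn_const a)).div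
      ((differentiableOn_const 1).sub ((differentiableOn_const ((starRingEnd ℂ) a)).mul hinvdiff))
      hden)
  have hgζ₂ : g ζ₂ = 0 := by
    rw [hgdef]
    simp only
    rw [← hadef, sub_self, zero_div]
  have hglt1 : ∀ z ∈ Metric.ball ζ₂ (2*s), ‖g z‖ < 1 := by
    intro z hz
    have hid := mobius_identity a ((Φ z)⁻¹)
    have hb1 := hbBlt1 z hz
    have hpos : 0 < (1 - ‖a‖^2) * (1 - ‖(Φ z)⁻¹‖^2) :=
      mul_pos (aux_one_sub_sq_pos _ (norm_nonneg a) halt1)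
        (aux_one_sub_sq_pos _ (norm_nonneg _) hb1)
    have hlt : ‖(Φ z)⁻¹ - a‖^2 < ‖1 - (starRingEnd ℂ) a * (Φ z)⁻¹‖^2 := by linarith
    have hltn : ‖(Φ z)⁻¹ - a‖ < ‖1 - (starRingEnd ℂ) a * (Φ z)⁻¹‖ :=
      lt_of_pow_lt_pow_left₀ 2 (norm_nonneg _) hlt
    rw [hgdef]
    simp only
    rw [norm_div]
    rw [div_lt_one (lt_of_le_of_lt (norm_nonneg _) hltn)]
    exact hltn
  have hgmaps : Set.MapsTo g (Metric.ball ζ₂ (2*s)) (Metric.ball (g ζ₂) 1) := by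
    intro z hz
    rw [Metric.mem_ball, hgζ₂, dist_zero_right]
    exact hglt1 z hz
  have hζ₁B : σ t₁ ∈ Metric.ball ζ₂ (2*s) := by
    rw [Metric.mem_ball]
    exact lt_of_le_of_lt hζ₁ζ₂ (by linarith)
  have hschwarz := Complex.dist_le_div_mul_dist_of_mapsTo_ball hgdiff (hgmaps.mono_right Metric.ball_subset_closedBall) hζ₁B
  have hghalf : ‖g (σ t₁)‖ ≤ 1/2 := by
    rw [hgζ₂, dist_zero_right] at hschwarz
    have h1 : 1/(2*s) * dist (σ t₁) ζ₂ ≤ 1/(2*s) * s := by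
      apply mul_le_mul_of_nonneg_left hζ₁ζ₂
      positivity
    have h2 : 1/(2*s) * s = 1/2 := by
      have hs' : s ≠ 0 := ne_of_gt hs
      field_simp
    calc ‖g (σ t₁)‖ ≤ 1/(2*s) * dist (σ t₁) ζ₂ := hschwarz
      _ ≤ 1/(2*s) * s := h1
      _ = 1/2 := h2
  -- final algebra
  have hbnorm : ‖(Φ (σ t₁))⁻¹‖ = (1+δ₁)⁻¹ := by rw [norm_inv, hζ₁n]
  have hbmul : ‖(Φ (σ t₁))⁻¹‖ * (1+δ₁) = 1 := by
    rw [hbnorm]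
    field_simp
  have hblt1 : ‖(Φ (σ t₁))⁻¹‖ < 1 := aux_lt_one _ _ hbmul hδ₁ (norm_nonneg _)
  have hdenne : 1 - (starRingEnd ℂ) a * (Φ (σ t₁))⁻¹ ≠ 0 := hden _ hζ₁B
  have hdenpos : 0 < ‖1 - (starRingEnd ℂ) a * (Φ (σ t₁))⁻¹‖ := norm_pos_iff.mpr hdenne
  have hnum : ‖(Φ (σ t₁))⁻¹ - a‖ ≤ 1/2 * ‖1 - (starRingEnd ℂ) a * (Φ (σ t₁))⁻¹‖ := by
    have := hghalf
    rw [hgdef] at this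
    simp only at this
    rw [norm_div, div_le_iff₀ hdenpos] at this
    linarith [this]
  have hid := mobius_identity a ((Φ (σ t₁))⁻¹)
  have hEge : 1 - ‖a‖ ≤ ‖1 - (starRingEnd ℂ) a * (Φ (σ t₁))⁻¹‖ := by
    have h1 : ‖(1:ℂ)‖ - ‖(starRingEnd ℂ) a * (Φ (σ t₁))⁻¹‖
        ≤ ‖1 - (starRingEnd ℂ) a * (Φ (σ t₁))⁻¹‖ := norm_sub_norm_le _ _
    rw [norm_one, norm_mul, RCLike.norm_conj] at h1
    have h2 : ‖a‖ * ‖(Φ (σ t₁))⁻¹‖ ≤ ‖a‖ :=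
      mul_le_of_le_one_right (norm_nonneg a) hblt1.le
    linarith
  have hmain : (3/8) * (1 - ‖a‖) ≤ 1 - ‖(Φ (σ t₁))⁻¹‖^2 :=
    schwarz_algebra (‖a‖) (‖(Φ (σ t₁))⁻¹‖) _ _ (norm_nonneg a) halt1 (norm_nonneg _)
      hblt1 hid hEge hnum (norm_nonneg _)
  have hfinal : δ₂ ≤ 16*K/3 * δ₁ :=
    final_algebra K δ₁ δ₂ (‖a‖) (‖(Φ (σ t₁))⁻¹‖) hKpos hδ₁ hδ₂ hamul hbmul
      (norm_nonneg a) (norm_nonneg _) hK2 hmain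
  have hlast : 16*K/3 * δ₁ ≤ (16*K/3 + 2) * δ₁ := by
    apply mul_le_mul_of_nonneg_right _ hδ₁.le
    linarith
  linarith
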